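/- Let F : ℝ → ℝ be C¹ with F(0) = 0 and |F'(t)| ≤ a(|t| + |t|^{q−1}) for some a > 0 and q > 2. Then for every ε > 0 there exists C_ε > 0 such that for all s, t ∈ ℝ: |F(s + t) − F(s)| ≤ ε(|s|² + |s|^q) + C_ε(|t|² + |t|^q). -/

import Mathlib

open MeasureTheory Filter Real
open scoped Topology

theorem stmt_11 (a q : ℝ) (ha : 0 < a) (hq : 2 < q)
    (F : ℝ → ℝ) (hF : ContDiff ℝ 1 F) (hF0 : F 0 = 0)
    (hF' : ∀ t : ℝ, |deriv F t| ≤ a * (|t| + |t| ^ (q - 1))) :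
    ∀ ε : ℝ, 0 < ε → ∃ C : ℝ, 0 < C ∧
      ∀ s t : ℝ, |F (s + t) - F s| ≤
        ε * (|s| ^ (2:ℝ) + |s| ^ q) + C * (|t| ^ (2:ℝ) + |t| ^ q) := by
  intro ε hε
  have hq1 : 1 ≤ q - 1 := by linarith
  have hq0 : 0 ≤ q - 1 := by linarith
  have h2q : (0:ℝ) < 2 ^ (q-1) := Real.rpow_pos_of_pos two_pos _
  obtain ⟨δ, hδ0, hδ1, hδε⟩ : ∃ δ : ℝ, 0 < δ ∧ δ ≤ 1 ∧ a * δ * 2 ^ (q-1) ≤ ε := by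
    refine ⟨min 1 (ε / (a * 2 ^ (q-1))), lt_min one_pos (div_pos hε (mul_pos ha h2q)),
      min_le_left _ _, ?_⟩
    have h1 : min 1 (ε / (a * 2 ^ (q-1))) ≤ ε / (a * 2 ^ (q-1)) := min_le_right _ _
    have h2 : min 1 (ε / (a * 2 ^ (q-1))) * (a * 2 ^ (q-1)) ≤ ε := by
      rw [← le_div_iff₀ (mul_pos ha h2q)]; exact h1
    linarith [h2, mul_comm (min 1 (ε / (a * 2 ^ (q-1)))) (a * 2 ^ (q-1))]
  set K : ℝ := 1 + 1/δ with hKdef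
  have hK1 : 1 ≤ K := by
    have h : 0 < 1/δ := by positivity
    rw [hKdef]; linarith
  have hK0 : 0 < K := by linarith
  clear_value K
  have hKq : (0:ℝ) < K ^ (q-1) := Real.rpow_pos_of_pos hK0 _
  have hKK : K ≤ K ^ (q-1) := by
    calc K = K ^ (1:ℝ) := (Real.rpow_one K).symm
    _ ≤ K ^ (q-1) := Real.rpow_le_rpow_of_exponent_le hK1 hq1
  refine ⟨a * K ^ (q-1), mul_pos ha hKq, fun s t => ?_⟩
  set m : ℝ := |s| + |t| with hmdef
  have hm0 : 0 ≤ m := by positivity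
  -- Mean value theorem bound
  have key : |F (s+t) - F s| ≤ a * (m + m ^ (q-1)) * |t| := by
    have hb : ∀ x ∈ Set.uIcc s (s+t), ‖deriv F x‖ ≤ a * (m + m ^ (q-1)) := by
      intro x hx
      rw [Set.mem_uIcc] at hx
      have hst : |s+t| ≤ m := by
        have := abs_add_le s t
        simp only [hmdef]; linarith
      have hss : |s| ≤ m := by
        have := abs_nonneg t
        simp only [hmdef]; linarith
      have hxm : |x| ≤ m := by
        rcases hx with ⟨h1, h2⟩ | ⟨h1, h2⟩
        · exact (abs_le_max_abs_abs h1 h2).trans (max_le hss hst)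
        · exact (abs_le_max_abs_abs h1 h2).trans (max_le hst hss)
      have h2 : |x| ^ (q-1) ≤ m ^ (q-1) :=
        Real.rpow_le_rpow (abs_nonneg x) hxm hq0
      calc ‖deriv F x‖ = |deriv F x| := rfl
      _ ≤ a * (|x| + |x| ^ (q-1)) := hF' x
      _ ≤ a * (m + m ^ (q-1)) :=
        mul_le_mul_of_nonneg_left (add_le_add hxm h2) ha.le
    have := Convex.norm_image_sub_le_of_norm_deriv_le
      (fun x _ => (hF.differentiable one_ne_zero).differentiableAt)
      hb (convex_uIcc s (s+t)) (Set.left_mem_uIcc) (Set.right_mem_uIcc)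
    simpa using this
  have hs2 : |s| ^ (2:ℝ) = |s| * |s| := by
    rw [show (2:ℝ) = ((2:ℕ):ℝ) by norm_num, Real.rpow_natCast]; ring
  have ht2 : |t| ^ (2:ℝ) = |t| * |t| := by
    rw [show (2:ℝ) = ((2:ℕ):ℝ) by norm_num, Real.rpow_natCast]; ring
  rcases eq_or_ne t 0 with rfl | ht0
  · simp only [add_zero, sub_self, abs_zero]
    positivity
  have htpos : 0 < |t| := abs_pos.mpr ht0
  have htq : |t| ^ q = |t| * |t| ^ (q-1) := by
    rw [show q = 1 + (q-1) by ring, Real.rpow_add htpos, Real.rpow_one]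
    ring_nf
  have hmq0 : 0 ≤ m ^ (q-1) := Real.rpow_nonneg hm0 _
  by_cases hcase : |t| ≤ δ * |s|
  · -- small t : absorb into the ε-term
    have hspos : 0 < |s| := by
      by_contra h
      push_neg at h
      have hs0 : |s| = 0 := le_antisymm h (abs_nonneg s)
      rw [hs0, mul_zero] at hcase
      linarith
    have hsq : |s| ^ q = |s| * |s| ^ (q-1) := by
      rw [show q = 1 + (q-1) by ring, Real.rpow_add hspos, Real.rpow_one]
      ring_nf
    have hm : m ≤ (1+δ) * |s| := by
      simp only [hmdef]; nlinarith
    have hmq : m ^ (q-1) ≤ (1+δ) ^ (q-1) * |s| ^ (q-1) := by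
      calc m ^ (q-1) ≤ ((1+δ) * |s|) ^ (q-1) := Real.rpow_le_rpow hm0 hm hq0
      _ = (1+δ) ^ (q-1) * |s| ^ (q-1) := Real.mul_rpow (by linarith) (abs_nonneg s)
    have h1δ : (1+δ) ≤ (1+δ) ^ (q-1) := by
      calc (1+δ) = (1+δ) ^ (1:ℝ) := (Real.rpow_one _).symm
      _ ≤ (1+δ) ^ (q-1) := Real.rpow_le_rpow_of_exponent_le (by linarith) hq1
    have h1δ2 : (1+δ) ^ (q-1) ≤ 2 ^ (q-1) :=
      Real.rpow_le_rpow (by linarith) (by linarith) hq0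
    have hsq1 : 0 ≤ |s| ^ (q-1) := Real.rpow_nonneg (abs_nonneg s) _
    have hcoef1 : a * δ * (1+δ) ≤ ε := by
      have : a * δ * (1+δ) ≤ a * δ * 2 ^ (q-1) :=
        mul_le_mul_of_nonneg_left (h1δ.trans h1δ2) (by positivity)
      linarith
    have hcoef2 : a * δ * (1+δ) ^ (q-1) ≤ ε := by
      have : a * δ * (1+δ) ^ (q-1) ≤ a * δ * 2 ^ (q-1) :=
        mul_le_mul_of_nonneg_left h1δ2 (by positivity)
      linarith
    have e1 : a * (m * |t|) ≤ ε * (|s| * |s|) := by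
      have h' : m * |t| ≤ ((1+δ) * |s|) * (δ * |s|) :=
        mul_le_mul hm hcase (abs_nonneg t) (by positivity)
      calc a * (m * |t|) ≤ a * (((1+δ) * |s|) * (δ * |s|)) :=
        mul_le_mul_of_nonneg_left h' ha.le
      _ = (a * δ * (1+δ)) * (|s| * |s|) := by ring
      _ ≤ ε * (|s| * |s|) :=
        mul_le_mul_of_nonneg_right hcoef1 (by positivity)
    have e2 : a * (m ^ (q-1) * |t|) ≤ ε * (|s| * |s| ^ (q-1)) := by
      have h' : m ^ (q-1) * |t| ≤ ((1+δ) ^ (q-1) * |s| ^ (q-1)) * (δ * |s|) :=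
        mul_le_mul hmq hcase (abs_nonneg t) (by positivity)
      calc a * (m ^ (q-1) * |t|) ≤ a * (((1+δ) ^ (q-1) * |s| ^ (q-1)) * (δ * |s|)) :=
        mul_le_mul_of_nonneg_left h' ha.le
      _ = (a * δ * (1+δ) ^ (q-1)) * (|s| * |s| ^ (q-1)) := by ring
      _ ≤ ε * (|s| * |s| ^ (q-1)) :=
        mul_le_mul_of_nonneg_right hcoef2 (by positivity)
    have step : a * (m + m ^ (q-1)) * |t| ≤ ε * (|s| ^ (2:ℝ) + |s| ^ q) := by
      rw [hs2, hsq]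
      have hr : a * (m + m ^ (q-1)) * |t| = a * (m * |t|) + a * (m ^ (q-1) * |t|) := by ring
      linarith [e1, e2]
    have hC : 0 ≤ a * K ^ (q-1) * (|t| ^ (2:ℝ) + |t| ^ q) := by
      rw [ht2, htq]
      positivity
    linarith [key, step, hC]
  · -- large t : absorb into the C-term
    push_neg at hcase
    have hm : m ≤ K * |t| := by
      have h1 : |s| ≤ |t| / δ := by
        rw [le_div_iff₀ hδ0]
        nlinarith [abs_nonneg s]
      have h2 : |t| / δ = |t| * (1/δ) := by ring
      simp only [hmdef]
      rw [hKdef]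
      nlinarith [h1, h2]
    have hmq : m ^ (q-1) ≤ K ^ (q-1) * |t| ^ (q-1) := by
      calc m ^ (q-1) ≤ (K * |t|) ^ (q-1) := Real.rpow_le_rpow hm0 hm hq0
      _ = K ^ (q-1) * |t| ^ (q-1) := Real.mul_rpow hK0.le (abs_nonneg t)
    have htq1 : 0 ≤ |t| ^ (q-1) := Real.rpow_nonneg (abs_nonneg t) _
    have step : a * (m + m ^ (q-1)) * |t| ≤
        a * K ^ (q-1) * (|t| ^ (2:ℝ) + |t| ^ q) := by
      rw [ht2, htq]
      have h1 : m * |t| ≤ (K * |t|) * |t| := mul_le_mul_of_nonneg_right hm (abs_nonneg t)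
      have h2 : m ^ (q-1) * |t| ≤ (K ^ (q-1) * |t| ^ (q-1)) * |t| :=
        mul_le_mul_of_nonneg_right hmq (abs_nonneg t)
      calc a * (m + m ^ (q-1)) * |t| = a * (m * |t|) + a * (m ^ (q-1) * |t|) := by ring
      _ ≤ a * ((K * |t|) * |t|) + a * ((K ^ (q-1) * |t| ^ (q-1)) * |t|) := by
        have c1 := mul_le_mul_of_nonneg_left h1 ha.le
        have c2 := mul_le_mul_of_nonneg_left h2 ha.le
        linarith
      _ = (a * K) * (|t| * |t|) + a * K ^ (q-1) * (|t| * |t| ^ (q-1)) := by ring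
      _ ≤ (a * K ^ (q-1)) * (|t| * |t|) + a * K ^ (q-1) * (|t| * |t| ^ (q-1)) := by
        have := mul_le_mul_of_nonneg_right (mul_le_mul_of_nonneg_left hKK ha.le)
          (mul_nonneg (abs_nonneg t) (abs_nonneg t))
        linarith
      _ = a * K ^ (q-1) * (|t| * |t| + |t| * |t| ^ (q-1)) := by ring
    have hε' : 0 ≤ ε * (|s| ^ (2:ℝ) + |s| ^ q) := by positivity
    linarith [key, step, hε']
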